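/- Let X_{13}, X_{14}, X_{15}, X_{24}, X_{25}, X_{26}, X_{35}, X_{36}, X_{46} be indeterminates (planar variables for 6 points) and let m6 be the sum of the 14 terms 1/(X_{14}X_{15}X_{24}) + 1/(X_{15}X_{24}X_{25}) + 1/(X_{24}X_{25}X_{26}) + 1/(X_{13}X_{15}X_{35}) + 1/(X_{15}X_{25}X_{35}) + 1/(X_{13}X_{14}X_{15}) + 1/(X_{13}X_{35}X_{36}) + 1/(X_{26}X_{35}X_{36}) + 1/(X_{13}X_{14}X_{46}) + 1/(X_{14}X_{24}X_{46}) + 1/(X_{24}X_{26}X_{46}) + 1/(X_{25}X_{26}X_{35}) + 1/(X_{26}X_{36}X_{46}) + 1/(X_{13}X_{36}X_{46}). Under the substitution X_{2i,2j} ↦ X_{2i,2j} - δ and X_{2i-1,2j-1} ↦ X_{2i-1,2j-1} + δ (i.e., X_{13}, X_{15}, X_{35} shifted by +δ; X_{24}, X_{26}, X_{46} shifted by -δ; X_{14}, X_{25}, X_{36} unshifted), the resulting rational function of δ, multiplied by δ⁴, tends as δ → ∞ to A6 = -(X_{13}+X_{15}+X_{24}+X_{26}+X_{35}+X_{46}) +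 (X_{15}+X_{26})(X_{24}+X_{35})/X_{25} + (X_{13}+X_{24})(X_{15}+X_{46})/X_{14} + (X_{13}+X_{26})(X_{35}+X_{46})/X_{36}. -/

import Mathlib

set_option maxHeartbeats 1600000


open Filter

/-- Under the NLSM shift (`X₁₃, X₁₅, X₃₅ ↦ · + δ`; `X₂₄, X₂₆, X₄₆ ↦ · - δ`; `X₁₄, X₂₅, X₃₆`
fixed), `δ⁴` times the shifted 14-term 6-point biadjoint scalar amplitude tends, as `δ → ∞`,
to the 6-point NLSM amplitude. -/
theorem six_point_NLSM_limit (X13 X14 X15 X24 X25 X26 X35 X36 X46 : ℝ)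
    (h13 : X13 ≠ 0) (h14 : X14 ≠ 0) (h15 : X15 ≠ 0) (h24 : X24 ≠ 0) (h25 : X25 ≠ 0)
    (h26 : X26 ≠ 0) (h35 : X35 ≠ 0) (h36 : X36 ≠ 0) (h46 : X46 ≠ 0) :
    Tendsto (fun δ : ℝ => δ ^ 4 *
      (1 / (X14 * (X15 + δ) * (X24 - δ)) + 1 / ((X15 + δ) * (X24 - δ) * X25)
        + 1 / ((X24 - δ) * X25 * (X26 - δ)) + 1 / ((X13 + δ) * (X15 + δ) * (X35 + δ))
        + 1 / ((X15 + δ) * X25 * (X35 + δ)) + 1 / ((X13 + δ) * X14 * (X15 + δ))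
        + 1 / ((X13 + δ) * (X35 + δ) * X36) + 1 / ((X26 - δ) * (X35 + δ) * X36)
        + 1 / ((X13 + δ) * X14 * (X46 - δ)) + 1 / (X14 * (X24 - δ) * (X46 - δ))
        + 1 / ((X24 - δ) * (X26 - δ) * (X46 - δ)) + 1 / (X25 * (X26 - δ) * (X35 + δ))
        + 1 / ((X26 - δ) * X36 * (X46 - δ)) + 1 / ((X13 + δ) * X36 * (X46 - δ))))
      atTop
      (nhds (-(X13 + X15 + X24 + X26 + X35 + X46)
        + (X15 + X26) * (X24 + X35) / X25
        + (X13 + X24) * (X15 + X46) / X14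
        + (X13 + X26) * (X35 + X46) / X36)) := by
  obtain ⟨N4, hN4⟩ : ∃ x : ℝ, x = (X24*X25*X26*X35*X36*X46 + X15*X24*X25*X26*X35*X36 + X14*X24*X25*X26*X36*X46 + X14*X15*X24*X25*X26*X46 + X14*X15*X24*X25*X26*X35 + X13*X25*X26*X35*X36*X46 + X13*X15*X25*X26*X35*X36 + X13*X14*X26*X35*X36*X46 + X13*X14*X24*X26*X36*X46 + X13*X14*X15*X35*X36*X46 + X13*X14*X15*X25*X35*X36 + X13*X14*X15*X24*X36*X46 + X13*X14*X15*X24*X25*X46 + X13*X14*X15*X24*X25*X35) := ⟨_, rfl⟩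
  obtain ⟨N5, hN5⟩ : ∃ x : ℝ, x = (-X24*X25*X35*X36*X46 + X24*X25*X26*X36*X46 - X15*X24*X25*X35*X36 + X15*X24*X25*X26*X36 + X14*X26*X35*X36*X46 - X14*X25*X26*X36*X46 + X14*X24*X26*X36*X46 - X14*X24*X25*X36*X46 + X14*X24*X25*X26*X46 - X14*X24*X25*X26*X36 + X14*X24*X25*X26*X35 + X14*X15*X35*X36*X46 + X14*X15*X25*X35*X36 - X14*X15*X25*X26*X46 - X14*X15*X25*X26*X35 + X14*X15*X24*X36*X46 - X13*X25*X35*X36*X46 + X13*X25*X26*X36*X46 - X13*X15*X25*X35*X36 + X13*X15*X25*X26*X36 - X13*X14*X26*X35*X36 + X13*X14*X25*X35*X36 - X13*X14*X24*X26*X36 + X13*X14*X24*X25*X46 + X13*X14*X24*X25*X35 - X13*X14*X15*X35*X36 - X13*X14*X15*X25*X46 + X13*X14*X15*X25*X36 - X13*X14*X15*X25*X35 - X13*X14*X15*X24*X36) := ⟨_, rfl⟩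
  obtain ⟨N6, hN6⟩ : ∃ x : ℝ, x = (-X24*X25*X36*X46 - X15*X24*X25*X36 - X14*X26*X35*X36 + X14*X25*X36*X46 + X14*X25*X35*X36 - X14*X25*X26*X46 + X14*X25*X26*X36 - X14*X25*X26*X35 - X14*X24*X26*X36 + X14*X24*X25*X36 - X14*X15*X35*X36 + X14*X15*X25*X36 - X14*X15*X24*X36 - X13*X25*X36*X46 - X13*X15*X25*X36 - X13*X14*X25*X46 + X13*X14*X25*X36 - X13*X14*X25*X35) := ⟨_, rfl⟩
  obtain ⟨h, hh⟩ : ∃ h : ℝ → ℝ, h = fun u =>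
    (N4 * u ^ 2 + N5 * u + N6) /
      (X14 * X25 * X36 * (X13 * u + 1) * (X15 * u + 1) * (X35 * u + 1)
        * (X24 * u - 1) * (X26 * u - 1) * (X46 * u - 1)) := ⟨_, rfl⟩
  have hden0 : (X14 * X25 * X36 * (X13 * (0:ℝ) + 1) * (X15 * 0 + 1) * (X35 * 0 + 1)
      * (X24 * 0 - 1) * (X26 * 0 - 1) * (X46 * 0 - 1)) ≠ 0 := by
    simpa using mul_ne_zero (mul_ne_zero h14 h25) h36
  have hcont : ContinuousAt h 0 := by
    rw [hh]
    exact ContinuousAt.div (by fun_prop) (by fun_prop) hden0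
  have hval : h 0 = (-(X13 + X15 + X24 + X26 + X35 + X46)
        + (X15 + X26) * (X24 + X35) / X25
        + (X13 + X24) * (X15 + X46) / X14
        + (X13 + X26) * (X35 + X46) / X36) := by
    simp only [hh, hN4, hN5, hN6]
    norm_num
    field_simp
    ring
  have comp : Tendsto (fun δ : ℝ => h δ⁻¹) atTop
      (nhds (-(X13 + X15 + X24 + X26 + X35 + X46)
        + (X15 + X26) * (X24 + X35) / X25
        + (X13 + X24) * (X15 + X46) / X14
        + (X13 + X26) * (X35 + X46) / X36)) := by
    rw [← hval]
    exact hcont.tendsto.comp tendsto_inv_atTop_zero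
  refine Tendsto.congr' ?_ comp
  filter_upwards [eventually_gt_atTop
    (|X13| + |X15| + |X35| + |X24| + |X26| + |X46| + 1)] with δ hδ
  have a13 := abs_nonneg X13
  have a15 := abs_nonneg X15
  have a35 := abs_nonneg X35
  have a24 := abs_nonneg X24
  have a26 := abs_nonneg X26
  have a46 := abs_nonneg X46
  have b13 := neg_abs_le X13
  have b15 := neg_abs_le X15
  have b35 := neg_abs_le X35
  have c24 := le_abs_self X24
  have c26 := le_abs_self X26
  have c46 := le_abs_self X46
  have hδpos : (0:ℝ) < δ := by linarith
  have hδ0 : δ ≠ 0 := ne_of_gt hδpos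
  have invδ : δ⁻¹ ≠ 0 := inv_ne_zero hδ0
  have p13 : X13 + δ ≠ 0 := ne_of_gt (by linarith)
  have p15 : X15 + δ ≠ 0 := ne_of_gt (by linarith)
  have p35 : X35 + δ ≠ 0 := ne_of_gt (by linarith)
  have m24 : X24 - δ ≠ 0 := ne_of_lt (by linarith)
  have m26 : X26 - δ ≠ 0 := ne_of_lt (by linarith)
  have m46 : X46 - δ ≠ 0 := ne_of_lt (by linarith)
  obtain ⟨D, hDdef⟩ : ∃ x : ℝ, x = X14 * X25 * X36 * (X13 + δ) * (X15 + δ) * (X35 + δ)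
      * (X24 - δ) * (X26 - δ) * (X46 - δ) := ⟨_, rfl⟩
  have hDne : D ≠ 0 := by
    rw [hDdef]
    exact mul_ne_zero (mul_ne_zero (mul_ne_zero (mul_ne_zero (mul_ne_zero
      (mul_ne_zero (mul_ne_zero (mul_ne_zero h14 h25) h36) p13) p15) p35) m24) m26) m46
  have e13 : X13 * δ⁻¹ + 1 = (X13 + δ) * δ⁻¹ := by field_simp
  have e15 : X15 * δ⁻¹ + 1 = (X15 + δ) * δ⁻¹ := by field_simp
  have e35 : X35 * δ⁻¹ + 1 = (X35 + δ) * δ⁻¹ := by field_simp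
  have e24 : X24 * δ⁻¹ - 1 = (X24 - δ) * δ⁻¹ := by field_simp
  have e26 : X26 * δ⁻¹ - 1 = (X26 - δ) * δ⁻¹ := by field_simp
  have e46 : X46 * δ⁻¹ - 1 = (X46 - δ) * δ⁻¹ := by field_simp
  have hden' : X14 * X25 * X36 * ((X13 + δ) * δ⁻¹) * ((X15 + δ) * δ⁻¹) * ((X35 + δ) * δ⁻¹)
      * ((X24 - δ) * δ⁻¹) * ((X26 - δ) * δ⁻¹) * ((X46 - δ) * δ⁻¹) ≠ 0 :=
    mul_ne_zero (mul_ne_zero (mul_ne_zero (mul_ne_zero (mul_ne_zero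
      (mul_ne_zero (mul_ne_zero (mul_ne_zero h14 h25) h36) (mul_ne_zero p13 invδ))
      (mul_ne_zero p15 invδ)) (mul_ne_zero p35 invδ)) (mul_ne_zero m24 invδ))
      (mul_ne_zero m26 invδ)) (mul_ne_zero m46 invδ)
  have hB : h δ⁻¹ = (N4 * δ ^ 4 + N5 * δ ^ 5 + N6 * δ ^ 6) / D := by
    simp only [hh]
    rw [e13, e15, e35, e24, e26, e46]
    rw [div_eq_div_iff hden' hDne, hDdef]
    field_simp
  have t1 : (1:ℝ) / (X14 * (X15 + δ) * (X24 - δ)) = (X25 * X36 * (X13 + δ) * (X35 + δ) * (X26 - δ) * (X46 - δ)) / D := by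
    rw [div_eq_div_iff (by exact mul_ne_zero (mul_ne_zero h14 p15) m24) hDne, hDdef]; ring
  have t2 : (1:ℝ) / ((X15 + δ) * (X24 - δ) * X25) = (X14 * X36 * (X13 + δ) * (X35 + δ) * (X26 - δ) * (X46 - δ)) / D := by
    rw [div_eq_div_iff (by exact mul_ne_zero (mul_ne_zero p15 m24) h25) hDne, hDdef]; ring
  have t3 : (1:ℝ) / ((X24 - δ) * X25 * (X26 - δ)) = (X14 * X36 * (X13 + δ) * (X15 + δ) * (X35 + δ) * (X46 - δ)) / D := by
    rw [div_eq_div_iff (by exact mul_ne_zero (mul_ne_zero m24 h25) m26) hDne, hDdef]; ring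
  have t4 : (1:ℝ) / ((X13 + δ) * (X15 + δ) * (X35 + δ)) = (X14 * X25 * X36 * (X24 - δ) * (X26 - δ) * (X46 - δ)) / D := by
    rw [div_eq_div_iff (by exact mul_ne_zero (mul_ne_zero p13 p15) p35) hDne, hDdef]; ring
  have t5 : (1:ℝ) / ((X15 + δ) * X25 * (X35 + δ)) = (X14 * X36 * (X13 + δ) * (X24 - δ) * (X26 - δ) * (X46 - δ)) / D := by
    rw [div_eq_div_iff (by exact mul_ne_zero (mul_ne_zero p15 h25) p35) hDne, hDdef]; ring
  have t6 : (1:ℝ) / ((X13 + δ) * X14 * (X15 + δ)) = (X25 * X36 * (X35 + δ) * (X24 - δ) * (X26 - δ) * (X46 - δ)) / D := by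
    rw [div_eq_div_iff (by exact mul_ne_zero (mul_ne_zero p13 h14) p15) hDne, hDdef]; ring
  have t7 : (1:ℝ) / ((X13 + δ) * (X35 + δ) * X36) = (X14 * X25 * (X15 + δ) * (X24 - δ) * (X26 - δ) * (X46 - δ)) / D := by
    rw [div_eq_div_iff (by exact mul_ne_zero (mul_ne_zero p13 p35) h36) hDne, hDdef]; ring
  have t8 : (1:ℝ) / ((X26 - δ) * (X35 + δ) * X36) = (X14 * X25 * (X13 + δ) * (X15 + δ) * (X24 - δ) * (X46 - δ)) / D := by
    rw [div_eq_div_iff (by exact mul_ne_zero (mul_ne_zero m26 p35) h36) hDne, hDdef]; ring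
  have t9 : (1:ℝ) / ((X13 + δ) * X14 * (X46 - δ)) = (X25 * X36 * (X15 + δ) * (X35 + δ) * (X24 - δ) * (X26 - δ)) / D := by
    rw [div_eq_div_iff (by exact mul_ne_zero (mul_ne_zero p13 h14) m46) hDne, hDdef]; ring
  have t10 : (1:ℝ) / (X14 * (X24 - δ) * (X46 - δ)) = (X25 * X36 * (X13 + δ) * (X15 + δ) * (X35 + δ) * (X26 - δ)) / D := by
    rw [div_eq_div_iff (by exact mul_ne_zero (mul_ne_zero h14 m24) m46) hDne, hDdef]; ring
  have t11 : (1:ℝ) / ((X24 - δ) * (X26 - δ) * (X46 - δ)) = (X14 * X25 * X36 * (X13 + δ) * (X15 + δ) * (X35 + δ)) / D := by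
    rw [div_eq_div_iff (by exact mul_ne_zero (mul_ne_zero m24 m26) m46) hDne, hDdef]; ring
  have t12 : (1:ℝ) / (X25 * (X26 - δ) * (X35 + δ)) = (X14 * X36 * (X13 + δ) * (X15 + δ) * (X24 - δ) * (X46 - δ)) / D := by
    rw [div_eq_div_iff (by exact mul_ne_zero (mul_ne_zero h25 m26) p35) hDne, hDdef]; ring
  have t13 : (1:ℝ) / ((X26 - δ) * X36 * (X46 - δ)) = (X14 * X25 * (X13 + δ) * (X15 + δ) * (X35 + δ) * (X24 - δ)) / D := by
    rw [div_eq_div_iff (by exact mul_ne_zero (mul_ne_zero m26 h36) m46) hDne, hDdef]; ring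
  have t14 : (1:ℝ) / ((X13 + δ) * X36 * (X46 - δ)) = (X14 * X25 * (X15 + δ) * (X35 + δ) * (X24 - δ) * (X26 - δ)) / D := by
    rw [div_eq_div_iff (by exact mul_ne_zero (mul_ne_zero p13 h36) m46) hDne, hDdef]; ring
  show h δ⁻¹ = _
  rw [t1, t2, t3, t4, t5, t6, t7, t8, t9, t10, t11, t12, t13, t14]
  simp only [← add_div]
  rw [← mul_div_assoc, hB, div_eq_div_iff hDne hDne, hN4, hN5, hN6]
  ring
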